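/- Let σ₁, σ₂ > 0, U > 0 and 0 < K ≤ U, let 𝐊 = U + (U − K)·σ₂/σ₁, and let g̲(x) = (K/U)·(x − 𝐊)^+. Then g̲ is convex on ℝ, g̲(x) ≤ g(x) for all x ∈ ℝ, and g̲ is the largest convex minorant of g: every convex function h : ℝ → ℝ with h(x) ≤ g(x) for all x satisfies h(x) ≤ g̲(x) for all x. -/

import Mathlib

open MeasureTheory Filter Set

/-- Standard normal cumulative distribution function. -/
noncomputable def stdNormalCDF (x : ℝ) : ℝ :=
  (Real.sqrt (2 * Real.pi))⁻¹ * ∫ y in Set.Iic x, Real.exp (-(y ^ 2) / 2)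

/-- Black–Scholes call price with zero interest and dividend rates. -/
noncomputable def bsCall (S K τ σ : ℝ) : ℝ :=
  let d1 := (Real.log (S / K) + σ ^ 2 * τ / 2) / (σ * Real.sqrt τ)
  S * stdNormalCDF d1 - K * stdNormalCDF (d1 - σ * Real.sqrt τ)

/-- Black–Scholes put price with zero interest and dividend rates. -/
noncomputable def bsPut (S K τ σ : ℝ) : ℝ := bsCall S K τ σ - S + K

/-- The denominator appearing in the PCLVG call price formula. -/
noncomputable def pclvgD (σ1 σ2 U τ : ℝ) : ℝ :=
  1 / σ1 + 1 / σ2 - (1 / σ2 - 1 / σ1) * Real.exp (-2 * U / (σ1 * τ))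

/-- The explicit PCLVG call price `C^σ(U,K,τ)`. -/
noncomputable def pclvgCall (σ1 σ2 U K τ : ℝ) : ℝ :=
  if K < U then
    (U - K) +
      τ * Real.exp (-(U - K) / (σ1 * τ)) * (1 - Real.exp (-2 * K / (σ1 * τ))) /
        pclvgD σ1 σ2 U τ
  else
    τ * Real.exp (-(K - U) / (σ2 * τ)) * (1 - Real.exp (-2 * U / (σ1 * τ))) /
      pclvgD σ1 σ2 U τ

/-- The PCLVG put price `P^σ(U,K,τ) = C^σ(U,K,τ) − (U − K)`. -/
noncomputable def pclvgPut (σ1 σ2 U K τ : ℝ) : ℝ := pclvgCall σ1 σ2 U K τ - (U - K)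

/-- The static-hedge payoff function `g` from the weak reflection principle: for each fixed `x`
only finitely many summands are nonzero, so the `tsum` is well defined. -/
noncomputable def gFun (σ1 σ2 U K x : ℝ) : ℝ :=
  ∑' n : ℕ,
    (max (x - U - (U * (2 * (n : ℝ) + 1) - K) * σ2 / σ1) 0 -
     max (x - U - (U * (2 * (n : ℝ) + 1) + K) * σ2 / σ1) 0)

namespace GFunAux

noncomputable def a (c U K : ℝ) (n : ℕ) : ℝ := U + (2*(n:ℝ)+1)*U*c - K*c

noncomputable def f (c U K x : ℝ) (k : ℕ) : ℝ :=
  max (x - a c U K k) 0 - max (x - (a c U K k + 2*K*c)) 0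

lemma a_add (c U K : ℝ) (n m : ℕ) : a c U K (n+m) = a c U K n + (m:ℝ)*(2*U*c) := by
  simp only [a]; push_cast; ring

lemma a_mono {c U : ℝ} (hc : 0 < c) (hU : 0 < U) (K : ℝ) {n m : ℕ} (h : n ≤ m) :
    a c U K n ≤ a c U K m := by
  obtain ⟨d, rfl⟩ := Nat.exists_eq_add_of_le h
  rw [a_add]
  nlinarith [mul_pos hU hc, Nat.cast_nonneg (α := ℝ) d,
    mul_nonneg (Nat.cast_nonneg (α := ℝ) d) (by nlinarith [mul_pos hU hc] : (0:ℝ) ≤ 2*U*c)]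

lemma f_nonneg {c K : ℝ} (hc : 0 < c) (hK : 0 < K) (U x : ℝ) (k : ℕ) :
    0 ≤ f c U K x k := by
  have : x - (a c U K k + 2*K*c) ≤ x - a c U K k := by nlinarith [mul_pos hK hc]
  exact sub_nonneg.2 (max_le_max this le_rfl)

lemma f_zero {c K : ℝ} (hc : 0 < c) (hK : 0 < K) {U x : ℝ} {k : ℕ}
    (h : x ≤ a c U K k) : f c U K x k = 0 := by
  have h2 : x - (a c U K k + 2*K*c) ≤ 0 := by nlinarith [mul_pos hK hc]
  simp [f, max_eq_right (sub_nonpos.2 h), max_eq_right h2]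

lemma f_full {c K : ℝ} (hc : 0 < c) (hK : 0 < K) {U x : ℝ} {k : ℕ} (h : a c U K k + 2*K*c ≤ x) :
    f c U K x k = 2*K*c := by
  rw [f, max_eq_left (by nlinarith [mul_pos hK hc]), max_eq_left (by linarith)]; ring

lemma f_mid {c U K x : ℝ} {k : ℕ} (h : a c U K k ≤ x) :
    f c U K x k = (x - a c U K k) - max (x - (a c U K k + 2*K*c)) 0 := by
  rw [f, max_eq_left (by linarith)]

lemma tsum_f_eq {c K : ℝ} (hc : 0 < c) (hK : 0 < K) (U x : ℝ) (N : ℕ)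
    (h : ∀ k, N ≤ k → x ≤ a c U K k) :
    ∑' k, f c U K x k = ∑ k ∈ Finset.range N, f c U K x k :=
  tsum_eq_sum (fun k hk => f_zero hc hK (h k (Nat.le_of_not_lt (fun h' => hk (Finset.mem_range.mpr h')))))

lemma exists_bound {c U : ℝ} (hc : 0 < c) (hU : 0 < U) (K x : ℝ) :
    ∃ N : ℕ, ∀ k, N ≤ k → x ≤ a c U K k := by
  obtain ⟨N, hN⟩ := exists_nat_ge ((x - a c U K 0)/(2*U*c))
  refine ⟨N, fun k hk => ?_⟩
  have h2 : (0:ℝ) < 2*U*c := by nlinarith [mul_pos hU hc]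
  have : (x - a c U K 0)/(2*U*c) ≤ (k:ℝ) := le_trans hN (by exact_mod_cast hk)
  have hle : x - a c U K 0 ≤ (k:ℝ)*(2*U*c) := by
    rw [div_le_iff₀ h2] at this; linarith
  have := a_add c U K 0 k
  simp only [Nat.zero_add] at this
  linarith

lemma two_Kc_le {c U K : ℝ} (hc : 0 < c) (hU : 0 < U) (hKU : K ≤ U) {k n : ℕ}
    (hkn : k < n) : a c U K k + 2*K*c ≤ a c U K n := by
  have h1 : a c U K (k + (n-k)) = a c U K k + ((n-k:ℕ):ℝ)*(2*U*c) := a_add c U K k (n-k)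
  rw [Nat.add_sub_cancel' hkn.le] at h1
  have hd : (1:ℝ) ≤ ((n-k:ℕ):ℝ) := by
    exact_mod_cast Nat.one_le_iff_ne_zero.mpr (Nat.sub_ne_zero_of_lt hkn)
  have h2 : (0:ℝ) ≤ 2*U*c := by nlinarith [mul_pos hU hc]
  nlinarith [mul_nonneg (sub_nonneg.2 hKU) hc.le, mul_nonneg (sub_nonneg.2 hd) h2]

lemma tsum_f_at_a {c U K : ℝ} (hc : 0 < c) (hU : 0 < U) (hK : 0 < K) (hKU : K ≤ U) (n : ℕ) :
    ∑' k, f c U K (a c U K n) k = (n:ℝ)*(2*K*c) := by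
  rw [tsum_f_eq hc hK U (a c U K n) n (fun k hk => a_mono hc hU K hk)]
  rw [Finset.sum_congr rfl (fun k hk => f_full hc hK (two_Kc_le hc hU hKU (Finset.mem_range.mp hk)))]
  simp [mul_comm]

end GFunAux

/-- `g̲(x) = (K/U)(x−𝐊)⁺` is the largest convex minorant of `g`. -/
theorem gFun_largest_convex_minorant (σ1 σ2 U K : ℝ)
    (h1 : 0 < σ1) (h2 : 0 < σ2) (hU : 0 < U) (hK : 0 < K) (hKU : K ≤ U) :
    ConvexOn ℝ Set.univ (fun x : ℝ => K / U * max (x - (U + (U - K) * σ2 / σ1)) 0) ∧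
    (∀ x : ℝ, K / U * max (x - (U + (U - K) * σ2 / σ1)) 0 ≤ gFun σ1 σ2 U K x) ∧
    (∀ h : ℝ → ℝ, ConvexOn ℝ Set.univ h → (∀ x : ℝ, h x ≤ gFun σ1 σ2 U K x) →
      ∀ x : ℝ, h x ≤ K / U * max (x - (U + (U - K) * σ2 / σ1)) 0) := by

  have hc : 0 < σ2 / σ1 := div_pos h2 h1
  set c := σ2 / σ1 with hcdef
  have hKU0 : 0 ≤ K / U := div_nonneg hK.le hU.le
  have h2Uc : (0:ℝ) < 2*U*c := by positivity
  -- identification of gFun with the tsum of f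
  have hgf : ∀ x : ℝ, gFun σ1 σ2 U K x = ∑' k, GFunAux.f c U K x k := by
    intro x
    refine tsum_congr fun n => ?_
    have e1 : x - U - (U * (2 * (n:ℝ) + 1) - K) * σ2 / σ1 = x - GFunAux.a c U K n := by
      simp only [GFunAux.a, hcdef]; ring
    have e2 : x - U - (U * (2 * (n:ℝ) + 1) + K) * σ2 / σ1
        = x - (GFunAux.a c U K n + 2*K*c) := by
      simp only [GFunAux.a, hcdef]; ring
    rw [e1, e2]; rfl
  have hKa : U + (U - K) * σ2 / σ1 = GFunAux.a c U K 0 := by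
    simp only [GFunAux.a, hcdef, Nat.cast_zero]; ring
  -- hfind
  have hfind : ∀ x : ℝ, GFunAux.a c U K 0 ≤ x →
      ∃ n : ℕ, GFunAux.a c U K n ≤ x ∧ x < GFunAux.a c U K (n+1) := by
    intro x hx
    have hP : ∃ n : ℕ, x < GFunAux.a c U K (n+1) := by
      obtain ⟨N, hN⟩ := GFunAux.exists_bound hc hU K (x+1)
      exact ⟨N, by linarith [hN (N+1) (Nat.le_succ N)]⟩
    refine ⟨Nat.find hP, ?_, Nat.find_spec hP⟩
    rcases Nat.eq_zero_or_pos (Nat.find hP) with h0 | hpos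
    · rw [h0]; exact hx
    · have hm := Nat.find_min hP (Nat.sub_lt hpos Nat.one_pos)
      rw [show Nat.find hP - 1 + 1 = Nat.find hP from by omega] at hm
      exact not_lt.mp hm
  refine ⟨?_, ?_, ?_⟩
  · -- convexity
    refine ⟨convex_univ, fun x _ y _ p q hp hq hpq => ?_⟩
    simp only [smul_eq_mul]
    set A := U + (U - K) * σ2 / σ1
    have hmax : max (p*x + q*y - A) 0 ≤ p * max (x - A) 0 + q * max (y - A) 0 := by
      apply max_le
      · calc p*x + q*y - A = p*(x-A) + q*(y-A) := by linear_combination A * hpq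
          _ ≤ p * max (x - A) 0 + q * max (y - A) 0 :=
            add_le_add (mul_le_mul_of_nonneg_left (le_max_left _ _) hp)
              (mul_le_mul_of_nonneg_left (le_max_left _ _) hq)
      · exact add_nonneg (mul_nonneg hp (le_max_right _ _)) (mul_nonneg hq (le_max_right _ _))
    calc K / U * max (p*x + q*y - A) 0
        ≤ K / U * (p * max (x - A) 0 + q * max (y - A) 0) :=
          mul_le_mul_of_nonneg_left hmax hKU0
      _ = p * (K / U * max (x - A) 0) + q * (K / U * max (y - A) 0) := by ring
  · -- minorant
    intro x
    rw [hgf x, hKa]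
    rcases le_or_gt x (GFunAux.a c U K 0) with hx | hx
    · rw [max_eq_right (by linarith)]
      simpa using tsum_nonneg (fun k => GFunAux.f_nonneg hc hK U x k)
    · obtain ⟨n, hle, hlt⟩ := hfind x hx.le
      have hsum : ∑' k, GFunAux.f c U K x k
          = (∑ k ∈ Finset.range n, GFunAux.f c U K x k) + GFunAux.f c U K x n := by
        rw [GFunAux.tsum_f_eq hc hK U x (n+1)
          (fun k hk => le_trans hlt.le (GFunAux.a_mono hc hU K hk))]
        exact Finset.sum_range_succ _ n
      have hconst : ∑ k ∈ Finset.range n, GFunAux.f c U K x k = (n:ℝ)*(2*K*c) := by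
        rw [Finset.sum_congr rfl (fun k hk => GFunAux.f_full hc hK
          (le_trans (GFunAux.two_Kc_le hc hU hKU (Finset.mem_range.mp hk)) hle))]
        simp [mul_comm]
      have hfn := GFunAux.f_mid (c := c) (U := U) (K := K) hle
      have han : GFunAux.a c U K n = GFunAux.a c U K 0 + (n:ℝ)*(2*U*c) := by
        simpa using GFunAux.a_add c U K 0 n
      have hup : x - GFunAux.a c U K n < 2*U*c := by
        have := GFunAux.a_add c U K n 1
        push_cast at this
        linarith
      rw [hsum, hconst, hfn, max_eq_left (by linarith)]
      rw [div_mul_eq_mul_div, div_le_iff₀ hU]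
      rcases le_or_gt (x - (GFunAux.a c U K n + 2*K*c)) 0 with hcase | hcase
      · rw [max_eq_right hcase]
        nlinarith [mul_nonneg (sub_nonneg.2 hKU) (sub_nonneg.2 hle),
          mul_nonneg (mul_nonneg (Nat.cast_nonneg (α := ℝ) n) hK.le) hc.le]
      · rw [max_eq_left hcase.le]
        nlinarith [mul_le_mul_of_nonneg_left hup.le hK.le,
          mul_nonneg (mul_nonneg (Nat.cast_nonneg (α := ℝ) n) hK.le) hc.le]
  · -- maximality
    intro h hconv hhle x
    have hle' : ∀ y : ℝ, h y ≤ ∑' k, GFunAux.f c U K y k := fun y => (hgf y) ▸ hhle y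
    rw [hKa]
    rcases le_or_gt x (GFunAux.a c U K 0) with hx | hx
    · have h0 : ∑' k, GFunAux.f c U K x k = 0 := by
        rw [GFunAux.tsum_f_eq hc hK U x 0
          (fun k _ => le_trans hx (GFunAux.a_mono hc hU K (Nat.zero_le k)))]
        simp
      rw [max_eq_right (by linarith), mul_zero]
      linarith [hle' x, h0.le]
    · obtain ⟨n, hle, hlt⟩ := hfind x hx.le
      set A := GFunAux.a c U K n with hA
      set B := GFunAux.a c U K (n+1) with hB
      have hdiff : B = A + 2*U*c := by
        have := GFunAux.a_add c U K n 1
        push_cast at this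
        rw [hB, hA]; linarith
      have hA0 : A = GFunAux.a c U K 0 + (n:ℝ)*(2*U*c) := by
        rw [hA]; simpa using GFunAux.a_add c U K 0 n
      have hp : 0 ≤ (B - x)/(2*U*c) := div_nonneg (by linarith) h2Uc.le
      have hq : 0 ≤ (x - A)/(2*U*c) := div_nonneg (by linarith) h2Uc.le
      have hpq : (B - x)/(2*U*c) + (x - A)/(2*U*c) = 1 := by
        rw [← add_div, hdiff]
        field_simp
        ring
      have key := hconv.2 (mem_univ A) (mem_univ B) hp hq hpq
      have hx_eq : ((B - x)/(2*U*c)) • A + ((x - A)/(2*U*c)) • B = x := by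
        simp only [smul_eq_mul]
        rw [hdiff]
        field_simp
        ring
      have hhA : h A ≤ (n:ℝ)*(2*K*c) := by
        have := GFunAux.tsum_f_at_a hc hU hK hKU n
        rw [hA]; linarith [hle' (GFunAux.a c U K n)]
      have hhB : h B ≤ ((n:ℝ)+1)*(2*K*c) := by
        have h1' := GFunAux.tsum_f_at_a hc hU hK hKU (n+1)
        push_cast at h1'
        rw [hB]; linarith [hle' (GFunAux.a c U K (n+1))]
      have target_eq : ((B - x)/(2*U*c))*((n:ℝ)*(2*K*c)) + ((x - A)/(2*U*c))*(((n:ℝ)+1)*(2*K*c))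
          = K/U*(x - GFunAux.a c U K 0) := by
        rw [hdiff, hA0]
        field_simp
        ring
      have ha0x : GFunAux.a c U K 0 ≤ x := hx.le
      calc h x = h (((B - x)/(2*U*c)) • A + ((x - A)/(2*U*c)) • B) := by rw [hx_eq]
        _ ≤ ((B - x)/(2*U*c)) • h A + ((x - A)/(2*U*c)) • h B := key
        _ = ((B - x)/(2*U*c)) * h A + ((x - A)/(2*U*c)) * h B := by simp [smul_eq_mul]
        _ ≤ ((B - x)/(2*U*c))*((n:ℝ)*(2*K*c)) + ((x - A)/(2*U*c))*(((n:ℝ)+1)*(2*K*c)) :=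
            add_le_add (mul_le_mul_of_nonneg_left hhA hp) (mul_le_mul_of_nonneg_left hhB hq)
        _ = K/U*(x - GFunAux.a c U K 0) := target_eq
        _ = K/U * max (x - GFunAux.a c U K 0) 0 := by rw [max_eq_left (by linarith)]
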